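/- Let A = Aᵀ ∈ ℝ^{n×n} be symmetric, let 1 ≤ s < d(A), and let v₀ ∈ ℝⁿ be a unit vector with d(A,v₀) = s+1 exactly. Consider the iteration ṽ_{k+1} = Arnoldi projection of v_k with respect to A and s, v_{k+1} = ṽ_{k+1}/‖ṽ_{k+1}‖. Then the even-indexed iterates are all equal: v₀ = v₂ = v₄ = ⋯. -/

import Mathlib

open Polynomial Filter Topology Matrix

noncomputable section

def mulv {ι : Type*} [Fintype ι] (A : Matrix ι ι ℝ) (v : EuclideanSpace ℝ ι) :
    EuclideanSpace ℝ ι :=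
  (WithLp.equiv 2 (ι → ℝ)).symm (A.mulVec ((WithLp.equiv 2 (ι → ℝ)) v))

def Krylov {ι : Type*} [Fintype ι] [DecidableEq ι] (A : Matrix ι ι ℝ) (s : ℕ) (v : EuclideanSpace ℝ ι) :
    Submodule ℝ (EuclideanSpace ℝ ι) :=
  Submodule.span ℝ (Set.range fun i : Fin s => mulv (A ^ (i : ℕ)) v)

def IsArnoldiProj {ι : Type*} [Fintype ι] [DecidableEq ι] (A : Matrix ι ι ℝ) (s : ℕ)
    (v w : EuclideanSpace ℝ ι) : Prop :=
  w - mulv (A ^ s) v ∈ Krylov A s v ∧ ∀ u ∈ Krylov A s v, inner ℝ w u = (0 : ℝ)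

def vgrade {ι : Type*} [Fintype ι] [DecidableEq ι] (A : Matrix ι ι ℝ)
    (v : EuclideanSpace ℝ ι) : ℕ :=
  sInf {d | ∃ p : ℝ[X], p ≠ 0 ∧ p.natDegree = d ∧ mulv (aeval A p) v = 0}

def dmin {ι : Type*} [Fintype ι] [DecidableEq ι] (A : Matrix ι ι ℝ) : ℕ :=
  (minpoly ℝ A).natDegree

def Phi {ι : Type*} [Fintype ι] [DecidableEq ι] (A : Matrix ι ι ℝ) (s : ℕ) : ℝ :=
  sSup {r | ∃ v : EuclideanSpace ℝ ι, ‖v‖ = 1 ∧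
    r = sInf {t | ∃ q : ℝ[X], q.Monic ∧ q.natDegree = s ∧ t = ‖mulv (aeval A q) v‖}}

def opNorm {ι : Type*} [Fintype ι] [DecidableEq ι] (A : Matrix ι ι ℝ) : ℝ :=
  ‖Matrix.toEuclideanCLM (𝕜 := ℝ) A‖


set_option linter.unusedSectionVars false
set_option maxHeartbeats 1000000

section Helpers
variable {ι : Type*} [Fintype ι] [DecidableEq ι]

lemma mulv_add_mat (A B : Matrix ι ι ℝ) (v : EuclideanSpace ℝ ι) :
    mulv (A + B) v = mulv A v + mulv B v := by
  ext i; simp [mulv, Matrix.add_mulVec]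

lemma mulv_smul_mat (c : ℝ) (A : Matrix ι ι ℝ) (v : EuclideanSpace ℝ ι) :
    mulv (c • A) v = c • mulv A v := by
  ext i; simp [mulv, Matrix.smul_mulVec]

lemma mulv_sum_mat {α : Type*} (t : Finset α) (f : α → Matrix ι ι ℝ) (v : EuclideanSpace ℝ ι) :
    mulv (∑ a ∈ t, f a) v = ∑ a ∈ t, mulv (f a) v := by
  induction t using Finset.cons_induction with
  | empty => ext i; simp [mulv]
  | cons a t ha ih => rw [Finset.sum_cons, Finset.sum_cons, mulv_add_mat, ih]

lemma mulv_mul (A B : Matrix ι ι ℝ) (v : EuclideanSpace ℝ ι) :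
    mulv (A * B) v = mulv A (mulv B v) := by
  ext i; simp [mulv, Matrix.mulVec_mulVec]

lemma mulv_addv (A : Matrix ι ι ℝ) (x y : EuclideanSpace ℝ ι) :
    mulv A (x + y) = mulv A x + mulv A y := by
  ext i; simp [mulv, Matrix.mulVec_add]

lemma mulv_smulv (A : Matrix ι ι ℝ) (c : ℝ) (x : EuclideanSpace ℝ ι) :
    mulv A (c • x) = c • mulv A x := by
  ext i; simp [mulv, Matrix.mulVec_smul]

lemma mulv_sumv {α : Type*} (A : Matrix ι ι ℝ) (t : Finset α) (f : α → EuclideanSpace ℝ ι) :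
    mulv A (∑ a ∈ t, f a) = ∑ a ∈ t, mulv A (f a) := by
  induction t using Finset.cons_induction with
  | empty => ext i; simp [mulv]
  | cons a t ha ih => rw [Finset.sum_cons, Finset.sum_cons, mulv_addv, ih]

lemma mulv_one (v : EuclideanSpace ℝ ι) : mulv 1 v = v := by
  ext i; simp [mulv]

lemma inner_mulv (A : Matrix ι ι ℝ) (hA : A.IsSymm) (x y : EuclideanSpace ℝ ι) :
    inner ℝ (mulv A x) y = (inner ℝ x (mulv A y) : ℝ) := by
  show inner ℝ ((WithLp.equiv 2 _).symm (A.mulVec x)) y = (inner ℝ x ((WithLp.equiv 2 _).symm (A.mulVec y)) : ℝ)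
  simp only [PiLp.inner_apply, RCLike.inner_apply, starRingEnd_apply, star_trivial]
  simp only [WithLp.equiv_symm_apply, PiLp.toLp_apply, Matrix.mulVec, dotProduct, Finset.sum_mul, Finset.mul_sum]
  rw [Finset.sum_comm]
  apply Finset.sum_congr rfl; intro i _; apply Finset.sum_congr rfl; intro j _
  have := Matrix.IsSymm.apply hA i j
  ring_nf; rw [this]; ring

lemma isSymm_pow (A : Matrix ι ι ℝ) (hA : A.IsSymm) (k : ℕ) : (A ^ k).IsSymm := by
  induction k with
  | zero => simp [Matrix.IsSymm]
  | succ k ih =>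
    rw [Matrix.IsSymm, pow_succ, Matrix.transpose_mul, ih, hA]
    exact ((Commute.refl A).pow_right k).eq

lemma inner_mulv_pow (A : Matrix ι ι ℝ) (hA : A.IsSymm) (k : ℕ) (x y : EuclideanSpace ℝ ι) :
    inner ℝ (mulv (A ^ k) x) y = (inner ℝ x (mulv (A ^ k) y) : ℝ) :=
  inner_mulv _ (isSymm_pow A hA k) x y

lemma aeval_mulv (A : Matrix ι ι ℝ) (p : ℝ[X]) (v : EuclideanSpace ℝ ι) :
    mulv (aeval A p) v = ∑ i ∈ Finset.range (p.natDegree + 1), p.coeff i • mulv (A ^ i) v := by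
  rw [Polynomial.aeval_eq_sum_range, mulv_sum_mat]
  exact Finset.sum_congr rfl fun i _ => mulv_smul_mat _ _ _

lemma mem_Krylov {A : Matrix ι ι ℝ} {s : ℕ} {v x : EuclideanSpace ℝ ι} :
    x ∈ Krylov A s v ↔ ∃ c : Fin s → ℝ, ∑ i, c i • mulv (A ^ (i : ℕ)) v = x := by
  rw [Krylov]
  exact Submodule.mem_span_range_iff_exists_fun ℝ

lemma gen_mem_Krylov {A : Matrix ι ι ℝ} {s : ℕ} {v : EuclideanSpace ℝ ι} {i : ℕ} (hi : i < s) :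
    mulv (A ^ i) v ∈ Krylov A s v :=
  Submodule.subset_span ⟨⟨i, hi⟩, rfl⟩

lemma grade_ne {A : Matrix ι ι ℝ} {s : ℕ} {v : EuclideanSpace ℝ ι}
    (hg : vgrade A v = s + 1) {p : ℝ[X]} (hp : p ≠ 0) (hd : p.natDegree ≤ s) :
    mulv (aeval A p) v ≠ 0 := by
  intro h
  have h2 : s + 1 ≤ p.natDegree := hg ▸ Nat.sInf_le ⟨p, hp, rfl, h⟩
  omega

lemma grade_exists {A : Matrix ι ι ℝ} {s : ℕ} {v : EuclideanSpace ℝ ι}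
    (hg : vgrade A v = s + 1) :
    ∃ p : ℝ[X], p ≠ 0 ∧ p.natDegree = s + 1 ∧ mulv (aeval A p) v = 0 := by
  have hne : {d | ∃ p : ℝ[X], p ≠ 0 ∧ p.natDegree = d ∧ mulv (aeval A p) v = 0}.Nonempty := by
    by_contra h
    rw [Set.not_nonempty_iff_eq_empty] at h
    rw [vgrade, h, Nat.sInf_empty] at hg
    omega
  have := Nat.sInf_mem hne
  rw [show sInf _ = vgrade A v from rfl, hg] at this
  exact this

-- polynomial built from coefficients
def cpoly {t : ℕ} (c : Fin t → ℝ) : ℝ[X] := ∑ i : Fin t, C (c i) * X ^ (i : ℕ)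

lemma cpoly_coeff {t : ℕ} (c : Fin t → ℝ) (j : Fin t) : (cpoly c).coeff (j : ℕ) = c j := by
  rw [cpoly, finset_sum_coeff]
  rw [Finset.sum_eq_single j]
  · simp
  · intro i _ hij
    rw [coeff_C_mul, coeff_X_pow, if_neg (by simpa [Fin.val_eq_val] using (Ne.symm hij)), mul_zero]
  · simp

lemma cpoly_natDegree_le {t : ℕ} (ht : 1 ≤ t) (c : Fin t → ℝ) : (cpoly c).natDegree ≤ t - 1 := by
  apply natDegree_sum_le_of_forall_le
  intro i _
  exact le_trans (natDegree_C_mul_X_pow_le _ _) (by omega)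

lemma cpoly_coeff_ge {t : ℕ} {c : Fin t → ℝ} {m : ℕ} (hm : t ≤ m) : (cpoly c).coeff m = 0 := by
  rw [cpoly, finset_sum_coeff]
  apply Finset.sum_eq_zero
  intro i _
  rw [coeff_C_mul, coeff_X_pow, if_neg (by omega), mul_zero]

lemma mulv_aeval_cpoly (A : Matrix ι ι ℝ) {t : ℕ} (c : Fin t → ℝ) (v : EuclideanSpace ℝ ι) :
    mulv (aeval A (cpoly c)) v = ∑ i : Fin t, c i • mulv (A ^ (i : ℕ)) v := by
  have : aeval A (cpoly c) = ∑ i : Fin t, c i • A ^ (i : ℕ) := by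
    rw [cpoly, map_sum]
    apply Finset.sum_congr rfl
    intro i _
    rw [_root_.map_mul, aeval_C, map_pow, aeval_X, Algebra.algebraMap_eq_smul_one, smul_mul_assoc, one_mul]
  rw [this, mulv_sum_mat]
  exact Finset.sum_congr rfl fun i _ => mulv_smul_mat _ _ _

lemma krylov_indep {A : Matrix ι ι ℝ} {t : ℕ} {v : EuclideanSpace ℝ ι} (ht : 1 ≤ t)
    (h : ∀ p : ℝ[X], p ≠ 0 → p.natDegree < t → mulv (aeval A p) v ≠ 0) :
    LinearIndependent ℝ (fun i : Fin t => mulv (A ^ (i : ℕ)) v) := by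
  rw [Fintype.linearIndependent_iff]
  intro g hsum
  by_contra hne
  push_neg at hne
  obtain ⟨j, hj⟩ := hne
  have hp0 : cpoly g ≠ 0 := fun h0 => hj (by rw [← cpoly_coeff g j, h0, coeff_zero])
  have hdeg : (cpoly g).natDegree < t := lt_of_le_of_lt (cpoly_natDegree_le ht g) (by omega)
  exact h _ hp0 hdeg (by rw [mulv_aeval_cpoly]; exact hsum)

lemma krylov_finrank {A : Matrix ι ι ℝ} {t : ℕ} {v : EuclideanSpace ℝ ι} (ht : 1 ≤ t)
    (h : ∀ p : ℝ[X], p ≠ 0 → p.natDegree < t → mulv (aeval A p) v ≠ 0) :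
    Module.finrank ℝ (Krylov A t v) = t := by
  rw [Krylov, finrank_span_eq_card (krylov_indep ht h)]
  simp

lemma top_mem_Krylov {A : Matrix ι ι ℝ} {s : ℕ} {v : EuclideanSpace ℝ ι}
    (hg : vgrade A v = s + 1) : mulv (A ^ (s + 1)) v ∈ Krylov A (s + 1) v := by
  obtain ⟨p, hp0, hpd, hpv⟩ := grade_exists hg
  rw [aeval_mulv, hpd] at hpv
  rw [Finset.sum_range_succ] at hpv
  have ha : p.coeff (s + 1) ≠ 0 := by
    rw [← hpd]; exact leadingCoeff_ne_zero.mpr hp0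
  have h1 : p.coeff (s + 1) • mulv (A ^ (s + 1)) v
      = - ∑ i ∈ Finset.range (s + 1), p.coeff i • mulv (A ^ i) v := by
    linear_combination (norm := module) hpv
  have h2 : mulv (A ^ (s + 1)) v
      = (p.coeff (s + 1))⁻¹ • (p.coeff (s + 1) • mulv (A ^ (s + 1)) v) := by
    rw [smul_smul, inv_mul_cancel₀ ha, one_smul]
  rw [h2, h1]
  apply Submodule.smul_mem
  apply Submodule.neg_mem
  apply Submodule.sum_mem
  intro i hi
  exact Submodule.smul_mem _ _ (gen_mem_Krylov (Finset.mem_range.mp hi))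

lemma mulv_mem_Krylov {A : Matrix ι ι ℝ} {s : ℕ} {v : EuclideanSpace ℝ ι}
    (hg : vgrade A v = s + 1) {x : EuclideanSpace ℝ ι} (hx : x ∈ Krylov A (s + 1) v) :
    mulv A x ∈ Krylov A (s + 1) v := by
  obtain ⟨c, rfl⟩ := mem_Krylov.mp hx
  rw [mulv_sumv]
  apply Submodule.sum_mem
  intro i _
  rw [mulv_smulv]
  apply Submodule.smul_mem
  have : mulv A (mulv (A ^ (i : ℕ)) v) = mulv (A ^ ((i : ℕ) + 1)) v := by
    rw [pow_succ', mulv_mul]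
  rw [this]
  rcases Nat.lt_or_ge ((i : ℕ) + 1) (s + 1) with h | h
  · exact gen_mem_Krylov h
  · have : (i : ℕ) + 1 = s + 1 := by omega
    rw [this]
    exact top_mem_Krylov hg

lemma pow_mulv_mem_Krylov {A : Matrix ι ι ℝ} {s : ℕ} {v : EuclideanSpace ℝ ι}
    (hg : vgrade A v = s + 1) {x : EuclideanSpace ℝ ι} (hx : x ∈ Krylov A (s + 1) v) (j : ℕ) :
    mulv (A ^ j) x ∈ Krylov A (s + 1) v := by
  induction j with
  | zero => rw [pow_zero, mulv_one]; exact hx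
  | succ j ih =>
    have : mulv (A ^ (j + 1)) x = mulv A (mulv (A ^ j) x) := by rw [pow_succ', mulv_mul]
    rw [this]
    exact mulv_mem_Krylov hg ih

lemma mulv_zerov (A : Matrix ι ι ℝ) : mulv A (0 : EuclideanSpace ℝ ι) = 0 := by
  ext i; simp [mulv]

lemma inner_mulv_aeval (A : Matrix ι ι ℝ) (hA : A.IsSymm) (p : ℝ[X]) (x y : EuclideanSpace ℝ ι) :
    inner ℝ (mulv (aeval A p) x) y = (inner ℝ x (mulv (aeval A p) y) : ℝ) := by
  rw [aeval_mulv, aeval_mulv, sum_inner, inner_sum]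
  apply Finset.sum_congr rfl
  intro i _
  rw [real_inner_smul_left, real_inner_smul_right, inner_mulv_pow A hA i]

lemma proj_repr {A : Matrix ι ι ℝ} {s : ℕ} {v w : EuclideanSpace ℝ ι}
    (h : IsArnoldiProj A s v w) :
    ∃ c : Fin s → ℝ, w = mulv (A ^ s) v + ∑ i, c i • mulv (A ^ (i : ℕ)) v := by
  obtain ⟨c, hc⟩ := mem_Krylov.mp h.1
  exact ⟨c, by rw [hc]; abel⟩

lemma proj_poly {A : Matrix ι ι ℝ} {s : ℕ} {v w : EuclideanSpace ℝ ι} (hs1 : 1 ≤ s)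
    (h : IsArnoldiProj A s v w) :
    ∃ q : ℝ[X], q ≠ 0 ∧ q.natDegree ≤ s ∧ mulv (aeval A q) v = w := by
  obtain ⟨c, hc⟩ := proj_repr h
  refine ⟨X ^ s + cpoly c, ?_, ?_, ?_⟩
  · intro h0
    have h1 : ((X ^ s + cpoly c : ℝ[X])).coeff s = 1 := by
      rw [coeff_add, coeff_X_pow, if_pos rfl, cpoly_coeff_ge (le_refl s), add_zero]
    rw [h0, coeff_zero] at h1
    exact one_ne_zero h1.symm
  · apply le_trans (natDegree_add_le _ _)
    apply max_le (le_of_eq (natDegree_X_pow s))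
    exact le_trans (cpoly_natDegree_le hs1 c) (by omega)
  · rw [map_add, mulv_add_mat, map_pow, aeval_X, mulv_aeval_cpoly, hc]

end Helpers

lemma key {n : ℕ} (A : Matrix (Fin n) (Fin n) ℝ) (hA : A.IsSymm) (s : ℕ) (hs1 : 1 ≤ s)
    (v0 vt1 v1 vt2 v2 : EuclideanSpace ℝ (Fin n))
    (hv0 : ‖v0‖ = 1) (hg : vgrade A v0 = s + 1)
    (h1 : IsArnoldiProj A s v0 vt1) (hn1 : v1 = ‖vt1‖⁻¹ • vt1)
    (h2 : IsArnoldiProj A s v1 vt2) (hn2 : v2 = ‖vt2‖⁻¹ • vt2) :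
    v2 = v0 := by
  obtain ⟨q1, hq1ne, hq1deg, hq1⟩ := proj_poly hs1 h1
  have hvt1 : vt1 ≠ 0 := hq1 ▸ grade_ne hg hq1ne hq1deg
  have hnvt1 : (0:ℝ) < ‖vt1‖ := norm_pos_iff.mpr hvt1
  have hv1 : ‖v1‖ = 1 := by
    rw [hn1, norm_smul, norm_inv, norm_norm, inv_mul_cancel₀ (ne_of_gt hnvt1)]
  have horthvt1 : ∀ u ∈ Krylov A s v0, (inner ℝ vt1 u : ℝ) = 0 := h1.2
  have horth1 : ∀ u ∈ Krylov A s v0, (inner ℝ v1 u : ℝ) = 0 := by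
    intro u hu; rw [hn1, real_inner_smul_left, horthvt1 u hu, mul_zero]
  have horth1' : ∀ i, i < s → (inner ℝ v1 (mulv (A ^ i) v0) : ℝ) = 0 :=
    fun i hi => horth1 _ (gen_mem_Krylov hi)
  have hα : (inner ℝ v1 (mulv (A ^ s) v0) : ℝ) = ‖vt1‖ := by
    have h0 : (inner ℝ vt1 (vt1 - mulv (A ^ s) v0) : ℝ) = 0 := horthvt1 _ h1.1
    rw [inner_sub_right] at h0
    have hss : (inner ℝ vt1 vt1 : ℝ) = ‖vt1‖ ^ 2 := real_inner_self_eq_norm_sq vt1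
    have h2' : (inner ℝ vt1 (mulv (A ^ s) v0) : ℝ) = ‖vt1‖ ^ 2 := by linarith
    rw [hn1, real_inner_smul_left, h2', sq, ← mul_assoc,
      inv_mul_cancel₀ (ne_of_gt hnvt1), one_mul]
  have hgrade1 : ∀ p : ℝ[X], p ≠ 0 → p.natDegree ≤ s → mulv (aeval A p) v1 ≠ 0 := by
    intro p hp hdeg hzero
    set t := p.natDegree with ht
    set r : ℝ[X] := X ^ (s - t) * p with hr
    have hrz : mulv (aeval A r) v1 = 0 := by
      rw [hr, _root_.map_mul, mulv_mul, hzero, mulv_zerov]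
    have hrdeg : r.natDegree = s := by
      rw [hr, natDegree_mul (pow_ne_zero _ X_ne_zero) hp, natDegree_X_pow]
      omega
    have hrcoeff : r.coeff s = p.leadingCoeff := by
      have h := coeff_X_pow_mul p (s - t) t
      rw [show t + (s - t) = s by omega] at h
      rw [hr, h]
      rfl
    have hsym : (inner ℝ (mulv (aeval A r) v1) v0 : ℝ) = inner ℝ v1 (mulv (aeval A r) v0) :=
      inner_mulv_aeval A hA r v1 v0
    rw [hrz, inner_zero_left] at hsym
    have hexp : (inner ℝ v1 (mulv (aeval A r) v0) : ℝ) = p.leadingCoeff * ‖vt1‖ := by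
      rw [aeval_mulv, hrdeg, inner_sum, Finset.sum_range_succ]
      rw [Finset.sum_eq_zero (fun i hi => by
        rw [real_inner_smul_right, horth1' i (Finset.mem_range.mp hi), mul_zero])]
      rw [zero_add, real_inner_smul_right, hα, hrcoeff]
    rw [← hsym] at hexp
    exact mul_ne_zero (leadingCoeff_ne_zero.mpr hp) (ne_of_gt hnvt1) hexp.symm
  obtain ⟨q2, hq2ne, hq2deg, hq2⟩ := proj_poly hs1 h2
  have hvt2 : vt2 ≠ 0 := hq2 ▸ hgrade1 q2 hq2ne hq2deg
  have hnvt2 : (0:ℝ) < ‖vt2‖ := norm_pos_iff.mpr hvt2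
  have hv2 : ‖v2‖ = 1 := by
    rw [hn2, norm_smul, norm_inv, norm_norm, inv_mul_cancel₀ (ne_of_gt hnvt2)]
  have horth0' : ∀ i, i < s → (inner ℝ v0 (mulv (A ^ i) v1) : ℝ) = 0 := by
    intro i hi
    rw [← inner_mulv_pow A hA i, real_inner_comm]
    exact horth1' i hi
  have horth0 : ∀ u ∈ Krylov A s v1, (inner ℝ v0 u : ℝ) = 0 := by
    intro u hu
    obtain ⟨c, rfl⟩ := mem_Krylov.mp hu
    rw [inner_sum]
    exact Finset.sum_eq_zero fun i _ => by
      rw [real_inner_smul_right, horth0' i i.isLt, mul_zero]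
  have horth2 : ∀ u ∈ Krylov A s v1, (inner ℝ v2 u : ℝ) = 0 := by
    intro u hu; rw [hn2, real_inner_smul_left, h2.2 u hu, mul_zero]
  obtain ⟨c2, hc2⟩ := proj_repr h2
  have hip02 : (inner ℝ v0 v2 : ℝ) = ‖vt2‖⁻¹ * ‖vt1‖ := by
    have hps : (inner ℝ v0 (mulv (A ^ s) v1) : ℝ) = ‖vt1‖ := by
      rw [← inner_mulv_pow A hA s, real_inner_comm]; exact hα
    have hv0vt2 : (inner ℝ v0 vt2 : ℝ) = ‖vt1‖ := by
      rw [hc2, inner_add_right, inner_sum, hps, Finset.sum_eq_zero (fun i _ => by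
        rw [real_inner_smul_right, horth0' i i.isLt, mul_zero]), add_zero]
    rw [hn2, real_inner_smul_right, hv0vt2]
  have hip02pos : (0:ℝ) < inner ℝ v0 v2 := by rw [hip02]; positivity
  set W := Krylov A (s+1) v0 with hWdef
  set K := Krylov A s v1 with hKdef
  have hWrank : Module.finrank ℝ W = s + 1 :=
    krylov_finrank (by omega) (fun p hp hd => grade_ne hg hp (by omega))
  have hKrank : Module.finrank ℝ K = s :=
    krylov_finrank hs1 (fun p hp hd => hgrade1 p hp (by omega))
  have hv0W : v0 ∈ W := by
    have h := gen_mem_Krylov (A := A) (v := v0) (s := s+1) (i := 0) (by omega)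
    rwa [pow_zero, mulv_one] at h
  have hvt1W : vt1 ∈ W := by
    obtain ⟨c1, hc1⟩ := proj_repr h1
    rw [hc1]
    exact Submodule.add_mem _ (gen_mem_Krylov (by omega))
      (Submodule.sum_mem _ fun i _ => Submodule.smul_mem _ _ (gen_mem_Krylov (by omega)))
  have hv1W : v1 ∈ W := by rw [hn1]; exact Submodule.smul_mem _ _ hvt1W
  have hKW : K ≤ W := by
    rw [hKdef, Krylov]
    apply Submodule.span_le.mpr
    rintro x ⟨i, rfl⟩
    exact pow_mulv_mem_Krylov hg hv1W (i : ℕ)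
  have hv2W : v2 ∈ W := by
    rw [hn2, hc2]
    exact Submodule.smul_mem _ _ (Submodule.add_mem _ (pow_mulv_mem_Krylov hg hv1W s)
      (Submodule.sum_mem _ fun i _ => Submodule.smul_mem _ _ (pow_mulv_mem_Krylov hg hv1W i)))
  have hv00 : (inner ℝ v0 v0 : ℝ) = 1 := by
    rw [real_inner_self_eq_norm_sq, hv0]; norm_num
  have hKs0 : K ⊓ (Submodule.span ℝ {v0}) = ⊥ := by
    rw [Submodule.eq_bot_iff]
    rintro x ⟨hxK, hx0⟩
    obtain ⟨c, rfl⟩ := Submodule.mem_span_singleton.mp hx0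
    have h := horth0 _ hxK
    rw [real_inner_smul_right, hv00, mul_one] at h
    rw [h, zero_smul]
  have hsup : K ⊔ (Submodule.span ℝ {v0}) = W := by
    apply Submodule.eq_of_le_of_finrank_eq
      (sup_le hKW (Submodule.span_le.mpr (by simpa using hv0W)))
    have hfr := Submodule.finrank_sup_add_finrank_inf_eq K (Submodule.span ℝ {v0})
    rw [hKs0] at hfr
    have hsv0 : Module.finrank ℝ (Submodule.span ℝ ({v0} : Set (EuclideanSpace ℝ (Fin n)))) = 1 :=
      finrank_span_singleton (by intro h; rw [h] at hv0; simp at hv0)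
    rw [hsv0, hKrank, finrank_bot] at hfr
    rw [hWrank]
    omega
  have hv2mem : v2 ∈ K ⊔ (Submodule.span ℝ {v0}) := hsup ▸ hv2W
  obtain ⟨u, huK, z, hz, huz⟩ := Submodule.mem_sup.mp hv2mem
  obtain ⟨c, rfl⟩ := Submodule.mem_span_singleton.mp hz
  have hueq : u = v2 - c • v0 := by rw [← huz]; abel
  have hu0 : (inner ℝ u u : ℝ) = 0 := by
    nth_rewrite 1 [hueq]
    rw [inner_sub_left, real_inner_smul_left, horth2 u huK, horth0 u huK]
    ring
  have hu : u = 0 := inner_self_eq_zero.mp hu0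
  rw [hu, zero_add] at huz
  have hcval : c = inner ℝ v0 v2 := by
    rw [← huz, real_inner_smul_right, hv00, mul_one]
  have hcpos : 0 < c := hcval ▸ hip02pos
  have hcabs : |c| = 1 := by
    have hnz := congrArg norm huz
    rw [norm_smul, hv0, mul_one, hv2, Real.norm_eq_abs] at hnz
    exact hnz
  have hc1 : c = 1 := by rw [abs_of_pos hcpos] at hcabs; exact hcabs
  rw [← huz, hc1, one_smul]

theorem symmetric_even_iterates_constant {n : ℕ} (A : Matrix (Fin n) (Fin n) ℝ)
    (hA : A.IsSymm) (s : ℕ) (hs1 : 1 ≤ s) (hs2 : s < dmin A)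
    (v vt : ℕ → EuclideanSpace ℝ (Fin n))
    (hv0 : ‖v 0‖ = 1) (hg : vgrade A (v 0) = s + 1)
    (hproj : ∀ k, IsArnoldiProj A s (v k) (vt (k + 1)))
    (hnorm : ∀ k, v (k + 1) = ‖vt (k + 1)‖⁻¹ • vt (k + 1)) :
    ∀ k, v (2 * k) = v 0 := by
  intro k
  induction k with
  | zero => rfl
  | succ k ih =>
    have hidx : 2 * (k + 1) = (2 * k + 1) + 1 := by ring
    have hg' : vgrade A (v (2 * k)) = s + 1 := by rw [ih]; exact hg
    have hv' : ‖v (2 * k)‖ = 1 := by rw [ih]; exact hv0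
    have hkey := key A hA s hs1 (v (2 * k)) (vt (2 * k + 1)) (v (2 * k + 1))
      (vt (2 * k + 1 + 1)) (v (2 * k + 1 + 1)) hv' hg'
      (hproj (2 * k)) (hnorm (2 * k)) (hproj (2 * k + 1)) (hnorm (2 * k + 1))
    rw [hidx, hkey, ih]
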